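/- Let D be a digraph of order n ≥ 6 with minimum out-degree and minimum in-degree both at least two, satisfying condition (*). Let C := x_1x_2…x_{n-1}x_1 be a cycle of length n−1 in D (subscripts modulo n−1), and let y be the vertex not on C. If for some i ∈ [1,n−1] the arc x_iy is in D and the vertices x_{i+1} and y are non-adjacent, then D contains a Hamiltonian bypass. -/

import Mathlib

open Finset

section SegAux

variable {V : Type*} {m : ℕ}

lemma castZMod_inj [NeZero m] {s t : ℕ} (hs : s < m) (ht : t < m)
    (h : (s : ZMod m) = (t : ZMod m)) : s = t := by
  have h1 := ZMod.val_cast_of_lt hs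
  have h2 := ZMod.val_cast_of_lt ht
  rw [h] at h1
  omega

variable (A : V → V → Prop) (x : ZMod m → V)

/-- A segment of the cycle: `x j, x (j+1), …, x (j+len-1)`. -/
def seg (j : ZMod m) (len : ℕ) : List V :=
  List.map (fun t : ℕ => x (j + (t : ZMod m))) (List.range len)

lemma seg_chain' (hcyc : ∀ i : ZMod m, A (x i) (x (i + 1))) (j : ZMod m) (len : ℕ) :
    List.Chain' A (seg x j len) := by
  rw [seg]
  unfold List.Chain'
  rw [List.isChain_map]
  cases len with
  | zero => simp
  | succ l =>
    rw [List.isChain_range_succ]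
    intro t _
    have h : j + ((t+1 : ℕ) : ZMod m) = j + (t : ZMod m) + 1 := by push_cast; ring
    rw [Nat.succ_eq_add_one, h]
    exact hcyc _

lemma seg_head (j : ZMod m) (l : ℕ) : (seg x j (l + 1)).head? = some (x j) := by
  rw [seg, List.range_succ_eq_map]
  simp

lemma seg_last (j : ZMod m) (l : ℕ) :
    (seg x j (l + 1)).getLast? = some (x (j + (l : ZMod m))) := by
  rw [seg, List.range_succ, List.map_append]
  simp [List.getLast?_concat]

lemma mem_seg {v : V} {j : ZMod m} {len : ℕ} :
    v ∈ seg x j len ↔ ∃ t, t < len ∧ x (j + (t : ZMod m)) = v := by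
  simp [seg, List.mem_map, List.mem_range]

lemma seg_nodup [NeZero m] (hinj : Function.Injective x) (j : ZMod m) {len : ℕ}
    (hlen : len ≤ m) : (seg x j len).Nodup := by
  rw [seg]
  refine List.Nodup.map_on ?_ List.nodup_range
  intro s hs t ht h
  simp only [List.mem_range] at hs ht
  have h2 : (s : ZMod m) = (t : ZMod m) := add_left_cancel (hinj h)
  exact castZMod_inj (lt_of_lt_of_le hs hlen) (lt_of_lt_of_le ht hlen) h2

lemma cast_val [NeZero m] (a : ZMod m) : ((a.val : ℕ) : ZMod m) = a :=
  ZMod.natCast_rightInverse a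

lemma seg_concat' (j : ZMod m) {len l : ℕ} (h : len = l + 1) :
    seg x j len = seg x j l ++ [x (j + (l : ZMod m))] := by
  subst h
  rw [seg, seg, List.range_succ, List.map_append]
  simp

lemma seg_head' (j : ZMod m) {len l : ℕ} (h : len = l + 1) :
    (seg x j len).head? = some (x j) := by
  subst h; exact seg_head x j l

lemma seg_last' (j : ZMod m) {len l : ℕ} (h : len = l + 1) :
    (seg x j len).getLast? = some (x (j + (l : ZMod m))) := by
  subst h; exact seg_last x j l

end SegAux

variable {V : Type*}

/-- Out-degree of a vertex. -/
def outDeg [Fintype V] (A : V → V → Prop) [DecidableRel A] (v : V) : ℕ :=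
  (Finset.univ.filter (fun u => A v u)).card

/-- In-degree of a vertex. -/
def inDeg [Fintype V] (A : V → V → Prop) [DecidableRel A] (v : V) : ℕ :=
  (Finset.univ.filter (fun u => A u v)).card

/-- Degree of a vertex: out-degree plus in-degree. -/
def deg [Fintype V] (A : V → V → Prop) [DecidableRel A] (v : V) : ℕ :=
  outDeg A v + inDeg A v

/-- Two vertices are adjacent if there is an arc between them in some direction. -/
def Adj (A : V → V → Prop) (u v : V) : Prop := A u v ∨ A v u

/-- Condition (*): for every pair of non-adjacent vertices with a common in-neighbour,
`min {d(x), d(y)} ≥ n - 1` and `d(x) + d(y) ≥ 2n - 1`. -/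
def CondStar [Fintype V] (A : V → V → Prop) [DecidableRel A] : Prop :=
  ∀ x y : V, x ≠ y → ¬ Adj A x y → (∃ z : V, A z x ∧ A z y) →
    min (deg A x) (deg A y) ≥ Fintype.card V - 1 ∧
    deg A x + deg A y ≥ 2 * Fintype.card V - 1

/-- A Hamiltonian bypass: an ordering `x₁, …, xₙ` of all vertices such that
`x₁x₂, …, x_{n-1}xₙ` and `x₁xₙ` are all arcs. -/
def HamBypass (A : V → V → Prop) : Prop :=
  ∃ l : List V, l.Nodup ∧ (∀ v : V, v ∈ l) ∧ l.Chain' A ∧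
    ∃ a b : V, l.head? = some a ∧ l.getLast? = some b ∧ A a b

section MainAux

variable [Fintype V] [DecidableEq V] (A : V → V → Prop) [DecidableRel A]

/-- counting filters through the cycle parametrization -/
lemma card_filter_comp {m : ℕ} [NeZero m] (x : ZMod m → V) (hinj : Function.Injective x)
    (y : V) (hsurj : ∀ v : V, v ≠ y → ∃ j, x j = v)
    (p : V → Prop) [DecidablePred p] (hpy : ¬ p y) :
    (Finset.univ.filter p).card = (Finset.univ.filter (fun j => p (x j))).card := by
  symm
  apply Finset.card_bij (fun j _ => x j)
  · intro j hj
    simp only [mem_filter, mem_univ, true_and] at hj ⊢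
    exact hj
  · intro a ha b hb h
    exact hinj h
  · intro v hv
    simp only [mem_filter, mem_univ, true_and] at hv
    obtain ⟨j, rfl⟩ := hsurj v (by rintro rfl; exact hpy hv)
    exact ⟨j, by simpa using hv, rfl⟩

/-- antichain in `ZMod m` -/
lemma antichain_card_bound {m : ℕ} [NeZero m] (S : Finset (ZMod m))
    (h : ∀ j ∈ S, j + 1 ∉ S) : 2 * S.card ≤ m := by
  have hdisj : Disjoint S (S.image (· + 1)) := by
    rw [Finset.disjoint_left]
    intro a haS haI
    obtain ⟨b, hbS, hb⟩ := Finset.mem_image.mp haI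
    subst hb
    exact h b hbS haS
  have hcard := Finset.card_union_of_disjoint hdisj
  have himg : (S.image (· + 1)).card = S.card :=

    Finset.card_image_of_injective S (add_left_injective 1)
  have hle : (S ∪ S.image (· + 1)).card ≤ Fintype.card (ZMod m) :=
    Finset.card_le_card (Finset.subset_univ _) |>.trans_eq (Finset.card_univ)
  rw [ZMod.card] at hle
  omega

end MainAux

theorem stmt8 [Fintype V] [DecidableEq V] (A : V → V → Prop) [DecidableRel A]
    (hloop : Irreflexive A)
    (n : ℕ) (hcard : Fintype.card V = n) (hn : 6 ≤ n)
    (hout : ∀ v : V, 2 ≤ outDeg A v) (hin : ∀ v : V, 2 ≤ inDeg A v)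
    (hstar : CondStar A)
    (x : ZMod (n - 1) → V) (hinj : Function.Injective x)
    (hcyc : ∀ i : ZMod (n - 1), A (x i) (x (i + 1)))
    (y : V) (hy : ∀ i : ZMod (n - 1), y ≠ x i)
    (i : ZMod (n - 1)) (h1 : A (x i) y) (h2 : ¬ Adj A (x (i + 1)) y) :
    HamBypass A := by
  have hm5 : 5 ≤ n - 1 := by omega
  haveI : NeZero (n - 1) := ⟨by omega⟩
  have hcardZ : Fintype.card (ZMod (n-1)) = (n-1) := ZMod.card (n-1)
  -- surjectivity onto V \ {y}
  have hsurj : ∀ v : V, v ≠ y → ∃ j : ZMod (n-1), x j = v := by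
    intro v hv
    have himg : (Finset.univ.image x).card = (n-1) := by
      rw [Finset.card_image_of_injective _ hinj, Finset.card_univ, hcardZ]
    have hyni : y ∉ Finset.univ.image x := by
      simp only [Finset.mem_image]
      rintro ⟨j, -, hj⟩
      exact hy j hj.symm
    have hins : (insert y (Finset.univ.image x)).card = Fintype.card V := by
      rw [Finset.card_insert_of_notMem hyni, himg, hcard]
      omega
    have huniv := Finset.eq_univ_of_card _ hins
    have hv2 : v ∈ insert y (Finset.univ.image x) := huniv ▸ Finset.mem_univ v
    rcases Finset.mem_insert.mp hv2 with h | h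
    · exact absurd h hv
    · obtain ⟨j, -, hj⟩ := Finset.mem_image.mp h
      exact ⟨j, hj⟩
  have hm1 : (n-1) = ((n-1) - 1) + 1 := by omega
  have hcast_m1 : (((n-1) - 1 : ℕ) : ZMod (n-1)) + 1 = 0 := by
    have : ((((n-1) - 1) + 1 : ℕ) : ZMod (n-1)) = 0 := by rw [← hm1]; exact ZMod.natCast_self (n-1)
    push_cast at this
    linear_combination this
  -- Case (b): two consecutive in-neighbours of y
  by_cases hb : ∃ j : ZMod (n-1), A (x j) y ∧ A (x (j + 1)) y
  · obtain ⟨j, hj1, hj2⟩ := hb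
    refine ⟨seg x (j + 1) (n-1) ++ [y], ?_, ?_, ?_, x (j + 1), y, ?_, ?_, hj2⟩
    · rw [List.nodup_append]
      refine ⟨seg_nodup x hinj _ le_rfl, List.nodup_singleton y, ?_⟩
      intro v hv w hv2 hvw
      subst hvw
      rw [List.mem_singleton] at hv2
      subst hv2
      obtain ⟨t, -, ht⟩ := (mem_seg x).mp hv
      exact hy _ ht.symm
    · intro v
      rw [List.mem_append]
      by_cases hvy : v = y
      · right; simp [hvy]
      · left
        obtain ⟨c, rfl⟩ := hsurj v hvy
        refine (mem_seg x).mpr ⟨(c - (j + 1)).val, ZMod.val_lt _, ?_⟩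
        rw [cast_val]
        ring_nf
    · unfold List.Chain'
      rw [List.isChain_append]
      refine ⟨seg_chain' A x hcyc _ _, List.isChain_singleton y, ?_⟩
      intro u hu w hw
      rw [seg_last' x _ hm1] at hu
      simp only [List.head?_cons, Option.mem_def, Option.some.injEq] at hu hw
      subst hu; subst hw
      have : j + 1 + (((n-1) - 1 : ℕ) : ZMod (n-1)) = j := by
        have := hcast_m1
        linear_combination this
      rw [this]
      exact hj1
    · rw [List.head?_append, seg_head' x _ hm1]
      rfl
    · rw [List.getLast?_concat]
  -- Case (c): two consecutive out-neighbours of y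
  by_cases hc : ∃ j : ZMod (n-1), A y (x j) ∧ A y (x (j + 1))
  · obtain ⟨j, hj1, hj2⟩ := hc
    refine ⟨y :: seg x (j + 1) (n-1), ?_, ?_, ?_, y, x j, rfl, ?_, hj1⟩
    · rw [List.nodup_cons]
      refine ⟨?_, seg_nodup x hinj _ le_rfl⟩
      intro hmem
      obtain ⟨t, -, ht⟩ := (mem_seg x).mp hmem
      exact hy _ ht.symm
    · intro v
      rw [List.mem_cons]
      by_cases hvy : v = y
      · left; exact hvy
      · right
        obtain ⟨c, rfl⟩ := hsurj v hvy
        refine (mem_seg x).mpr ⟨(c - (j + 1)).val, ZMod.val_lt _, ?_⟩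
        rw [cast_val]
        ring_nf
    · unfold List.Chain'
      rw [List.isChain_cons]
      refine ⟨?_, seg_chain' A x hcyc _ _⟩
      intro u hu
      rw [seg_head' x _ hm1] at hu
      simp only [Option.mem_def, Option.some.injEq] at hu
      subst hu
      exact hj2
    · have hcc := seg_concat' x (j + 1) hm1
      rw [hcc]
      rw [show (y :: (seg x (j+1) ((n-1)-1) ++ [x (j + 1 + (((n-1) - 1 : ℕ) : ZMod (n-1)))]))
          = (y :: seg x (j+1) ((n-1)-1)) ++ [x (j + 1 + (((n-1) - 1 : ℕ) : ZMod (n-1)))] from rfl]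
      rw [List.getLast?_concat]
      congr 2
      linear_combination hcast_m1
  -- Main case: counting
  push_neg at hb hc
  set I : Finset (ZMod (n-1)) := Finset.univ.filter (fun j => A (x j) y) with hIdef
  set O : Finset (ZMod (n-1)) := Finset.univ.filter (fun j => A y (x j)) with hOdef
  have hImem : ∀ j : ZMod (n-1), j ∈ I ↔ A (x j) y := by
    intro j; simp [hIdef]
  have hOmem : ∀ j : ZMod (n-1), j ∈ O ↔ A y (x j) := by
    intro j; simp [hOdef]
  have hIanti : ∀ j ∈ I, j + 1 ∉ I := by
    intro j hj hj1
    exact hb j ((hImem j).mp hj) ((hImem _).mp hj1)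
  have hOanti : ∀ j ∈ O, j + 1 ∉ O := by
    intro j hj hj1
    exact hc j ((hOmem j).mp hj) ((hOmem _).mp hj1)
  have hIb : 2 * I.card ≤ (n-1) := antichain_card_bound I hIanti
  have hOb : 2 * O.card ≤ (n-1) := antichain_card_bound O hOanti
  -- apply condition (*)
  have hne : x (i + 1) ≠ y := fun h => (hy (i + 1)) h.symm
  have hst := hstar (x (i + 1)) y hne h2 ⟨x i, hcyc i, h1⟩
  have hiy : inDeg A y = I.card := by
    rw [inDeg]
    exact card_filter_comp x hinj y hsurj (fun u => A u y) (fun h => hloop y h)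
  have hoy : outDeg A y = O.card := by
    rw [outDeg]
    exact card_filter_comp x hinj y hsurj (fun u => A y u) (fun h => hloop y h)
  have hdy : deg A y = O.card + I.card := by rw [deg, hiy, hoy]
  have hdy_ge : deg A y ≥ (n-1) := by
    have := (le_min_iff.mp hst.1).2
    rw [hcard] at this
    omega
  have hIO : I.card + O.card = (n-1) ∧ 2 * I.card = (n-1) := by omega
  -- x (i+2) is an in-neighbour of y
  have hi1I : (i + 1) ∉ I := by
    rw [hImem]
    intro h
    exact h2 (Or.inl h)
  have hi2I : A (x (i + 2)) y := by
    have hdisj : Disjoint I (I.image (· + 1)) := by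
      rw [Finset.disjoint_left]
      intro a haS haI
      obtain ⟨b, hbS, hb⟩ := Finset.mem_image.mp haI
      subst hb
      exact hIanti b hbS haS
    have hcu : (I ∪ I.image (· + 1)).card = Fintype.card (ZMod (n-1)) := by
      rw [Finset.card_union_of_disjoint hdisj,
        Finset.card_image_of_injective _ (add_left_injective 1), hcardZ]
      omega
    have huniv := Finset.eq_univ_of_card _ hcu
    have : i + 2 ∈ I ∪ I.image (· + 1) := huniv ▸ Finset.mem_univ _
    rcases Finset.mem_union.mp this with h | h
    · exact (hImem _).mp h
    · exfalso
      obtain ⟨b, hbI, hb⟩ := Finset.mem_image.mp h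
      have : b = i + 1 := by
        have : b + 1 = i + 1 + 1 := by rw [hb]; ring
        exact add_right_cancel this
      subst this
      exact hi1I hbI
  -- degree of x (i+1)
  have hdeg1 : deg A (x (i + 1)) ≥ (n-1) + 1 := by
    have := hst.2
    rw [hcard] at this
    omega
  -- insertion of x (i+1)
  have hins : ∃ a : ZMod (n-1), a ≠ i ∧ a ≠ i + 1 ∧ A (x a) (x (i + 1)) ∧ A (x (i + 1)) (x (a + 1)) := by
    by_contra hno
    push_neg at hno
    set S : Finset (ZMod (n-1)) :=
      Finset.univ.filter (fun a => a ≠ i ∧ a ≠ i + 1 ∧ A (x a) (x (i + 1))) with hSdef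
    set T : Finset (ZMod (n-1)) := Finset.univ.filter (fun b => A (x (i + 1)) (x b)) with hTdef
    have hyin : ¬ A y (x (i + 1)) := fun h => h2 (Or.inr h)
    have hyout : ¬ A (x (i + 1)) y := fun h => h2 (Or.inl h)
    have hin1 : inDeg A (x (i + 1)) = S.card + 1 := by
      have e1 : inDeg A (x (i + 1))
          = (Finset.univ.filter (fun j : ZMod (n-1) => A (x j) (x (i + 1)))).card :=
        card_filter_comp x hinj y hsurj (fun u => A u (x (i + 1))) hyin
      have hfeq : Finset.univ.filter (fun j : ZMod (n-1) => A (x j) (x (i + 1))) = insert i S := by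
        ext a
        simp only [Finset.mem_filter, Finset.mem_univ, true_and, Finset.mem_insert, hSdef]
        constructor
        · intro ha
          by_cases hai : a = i
          · exact Or.inl hai
          · right
            refine ⟨hai, ?_, ha⟩
            rintro rfl
            exact hloop _ ha
        · rintro (rfl | ⟨-, -, ha⟩)
          · exact hcyc _
          · exact ha
      rw [e1, hfeq, Finset.card_insert_of_notMem (by simp [hSdef])]
    have hout1 : outDeg A (x (i + 1)) = T.card := by
      rw [outDeg]
      exact card_filter_comp x hinj y hsurj (fun u => A (x (i + 1)) u) hyout
    have hdisj : Disjoint (S.image (· + 1)) T := by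
      rw [Finset.disjoint_left]
      intro b hbi hbT
      obtain ⟨a, haS, hab⟩ := Finset.mem_image.mp hbi
      simp only [hSdef, Finset.mem_filter, Finset.mem_univ, true_and] at haS
      obtain ⟨ha1, ha2, ha3⟩ := haS
      subst hab
      simp only [hTdef, Finset.mem_filter, Finset.mem_univ, true_and] at hbT
      exact hno a ha1 ha2 ha3 hbT
    have hi1nm : i + 1 ∉ S.image (· + 1) ∪ T := by
      rw [Finset.mem_union]
      rintro (h | h)
      · obtain ⟨a, haS, hab⟩ := Finset.mem_image.mp h
        simp only [hSdef, Finset.mem_filter, Finset.mem_univ, true_and] at haS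
        exact haS.1 (add_right_cancel hab)
      · simp only [hTdef, Finset.mem_filter, Finset.mem_univ, true_and] at h
        exact hloop _ h
    have hcount : S.card + T.card + 1 ≤ (n-1) := by
      have h1 : (insert (i + 1) (S.image (· + 1) ∪ T)).card ≤ (n-1) := by
        have hle := Finset.card_le_univ (insert (i + 1) (S.image (· + 1) ∪ T))
        rwa [hcardZ] at hle
      rw [Finset.card_insert_of_notMem hi1nm, Finset.card_union_of_disjoint hdisj,
        Finset.card_image_of_injective _ (add_left_injective 1)] at h1
      omega
    rw [deg, hout1, hin1] at hdeg1
    omega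
  -- construct the bypass using the insertion
  obtain ⟨a, hai, hai1, ha1, ha2⟩ := hins
  set k := (a - (i + 2)).val with hkdef
  have hka : i + 2 + (k : ZMod (n-1)) = a := by
    rw [hkdef, cast_val]
    ring
  have hkm : k < (n-1) := ZMod.val_lt _
  have hcast_m2 : (((n-1) - 2 : ℕ) : ZMod (n-1)) + 2 = 0 := by
    have : ((((n-1) - 2) + 2 : ℕ) : ZMod (n-1)) = 0 := by
      rw [show ((n-1) - 2) + 2 = (n-1) from by omega]; exact ZMod.natCast_self (n-1)
    push_cast at this
    linear_combination this
  have hkne1 : k ≠ (n-1) - 1 := by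
    intro h
    rw [h] at hka
    apply hai1
    rw [← hka]
    linear_combination hcast_m1
  have hkne2 : k ≠ (n-1) - 2 := by
    intro h
    rw [h] at hka
    apply hai
    rw [← hka]
    linear_combination hcast_m2
  have hk3 : k ≤ (n-1) - 3 := by omega
  have hlen2 : (n-1) - 2 - k = ((n-1) - 3 - k) + 1 := by omega
  have hseg2last : a + 1 + (((n-1) - 3 - k : ℕ) : ZMod (n-1)) = i := by
    rw [← hka]
    have hsum : (((k : ℕ) + ((n-1) - 3 - k) + 3 : ℕ) : ZMod (n-1)) = 0 := by
      rw [show (k : ℕ) + ((n-1) - 3 - k) + 3 = (n-1) from by omega]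
      exact ZMod.natCast_self (n-1)
    push_cast at hsum
    linear_combination hsum
  -- generic fact: indices from the two segments and the middle point
  have hidx : ∀ t : ℕ, t < (n-1) → (i + 2 + (t : ZMod (n-1)) = i + 1 ↔ t = (n-1) - 1) := by
    intro t ht
    constructor
    · intro h
      have h0 : ((t + 1 : ℕ) : ZMod (n-1)) = 0 := by push_cast; linear_combination h
      have hdvd := (ZMod.natCast_eq_zero_iff _ _).mp h0
      have := Nat.le_of_dvd (by omega) hdvd
      omega
    · rintro rfl
      linear_combination hcast_m1
  have hinj2 : ∀ s t : ℕ, s < (n-1) → t < (n-1) → i + 2 + (s : ZMod (n-1)) = i + 2 + (t : ZMod (n-1)) → s = t := by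
    intro s t hs ht h
    exact castZMod_inj hs ht (by linear_combination h)
  have hseg2idx : ∀ t : ℕ, a + 1 + (t : ZMod (n-1)) = i + 2 + ((k + 1 + t : ℕ) : ZMod (n-1)) := by
    intro t
    rw [← hka]
    push_cast
    ring
  refine ⟨seg x (i + 2) (k + 1) ++ ([x (i + 1)] ++ (seg x (a + 1) ((n-1) - 2 - k) ++ [y])),
    ?_, ?_, ?_, x (i + 2), y, ?_, ?_, hi2I⟩
  · -- Nodup
    rw [List.nodup_append]
    refine ⟨seg_nodup x hinj _ (by omega), ?_, ?_⟩
    · rw [List.nodup_append]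
      refine ⟨List.nodup_singleton _, ?_, ?_⟩
      · rw [List.nodup_append]
        refine ⟨seg_nodup x hinj _ (by omega), List.nodup_singleton _, ?_⟩
        intro v hv w hv2 hvw
        subst hvw
        rw [List.mem_singleton] at hv2
        subst hv2
        obtain ⟨t, -, ht⟩ := (mem_seg x).mp hv
        exact hy _ ht.symm
      · intro v hv w hv2 hvw
        subst hvw
        rw [List.mem_singleton] at hv
        subst hv
        rw [List.mem_append] at hv2
        rcases hv2 with hv2 | hv2
        · obtain ⟨t, htl, ht⟩ := (mem_seg x).mp hv2
          have heq := hinj ht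
          rw [hseg2idx t] at heq
          have hlt : k + 1 + t < (n-1) := by omega
          have := (hidx _ hlt).mp heq
          omega
        · rw [List.mem_singleton] at hv2
          exact hy _ hv2.symm
    · intro v hv w hv2 hvw
      subst hvw
      obtain ⟨s, hsl, hs⟩ := (mem_seg x).mp hv
      subst hs
      rw [List.mem_append, List.mem_singleton] at hv2
      rcases hv2 with hv2 | hv2
      · have heq := hinj hv2
        have := (hidx s (by omega)).mp heq
        omega
      · rw [List.mem_append, List.mem_singleton] at hv2
        rcases hv2 with hv2 | hv2
        · obtain ⟨t, htl, ht⟩ := (mem_seg x).mp hv2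
          have heq := hinj ht.symm
          rw [hseg2idx t] at heq
          have := hinj2 s (k + 1 + t) (by omega) (by omega) heq
          omega
        · exact hy _ hv2.symm
  · -- coverage
    intro v
    simp only [List.mem_append, List.mem_singleton]
    by_cases hvy : v = y
    · right; right; right; exact hvy
    obtain ⟨c, rfl⟩ := hsurj v hvy
    set r := (c - (i + 2)).val with hrdef
    have hrm : r < (n-1) := ZMod.val_lt _
    have hrc : i + 2 + (r : ZMod (n-1)) = c := by
      rw [hrdef, cast_val]
      ring
    by_cases hr1 : r ≤ k
    · left
      exact (mem_seg x).mpr ⟨r, by omega, by rw [hrc]⟩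
    by_cases hr2 : r = (n-1) - 1
    · right; left
      apply congrArg
      rw [← hrc, hr2]
      linear_combination hcast_m1
    · right; right; left
      refine (mem_seg x).mpr ⟨r - (k + 1), by omega, ?_⟩
      rw [hseg2idx, show k + 1 + (r - (k + 1)) = r from by omega, hrc]
  · -- chain'
    unfold List.Chain'
    rw [List.isChain_append]
    refine ⟨seg_chain' A x hcyc _ _, ?_, ?_⟩
    · rw [List.isChain_append]
      refine ⟨List.isChain_singleton _, ?_, ?_⟩
      · rw [List.isChain_append]
        refine ⟨seg_chain' A x hcyc _ _, List.isChain_singleton _, ?_⟩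
        intro u hu w hw
        rw [seg_last' x _ hlen2] at hu
        simp only [List.head?_cons, Option.mem_def, Option.some.injEq] at hu hw
        subst hu; subst hw
        rw [hseg2last]
        exact h1
      · intro u hu w hw
        simp only [List.getLast?_singleton, Option.mem_def, Option.some.injEq] at hu
        subst hu
        rw [List.head?_append, seg_head' x _ hlen2] at hw
        have : w = x (a + 1) := by
          have := hw; simp at this; exact this.symm
        subst this
        exact ha2
    · intro u hu w hw
      rw [seg_last] at hu
      simp only [Option.mem_def, Option.some.injEq] at hu
      subst hu
      have : w = x (i + 1) := by
        have := hw; simp at this; exact this.symm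
      subst this
      rw [hka]
      exact ha1
  · rw [List.head?_append, seg_head]
    rfl
  · rw [show seg x (i + 2) (k + 1) ++ ([x (i + 1)] ++ (seg x (a + 1) ((n-1) - 2 - k) ++ [y]))
        = (seg x (i + 2) (k + 1) ++ ([x (i + 1)] ++ seg x (a + 1) ((n-1) - 2 - k))) ++ [y] from by
          simp [List.append_assoc], List.getLast?_concat]
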